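/- Let H be an r-uniform hypergraph and let (C,P) be a lollipop in H whose cycle C = v_1, e_1, v_2, …, v_c, e_c, v_1 is a longest Berge cycle of H (a 1-good lollipop). Write P = u_0, f_0, u_1, …, f_{ℓ−1}, u_ℓ with u_0 = v_c if (C,P) is an o-lollipop, and P = f_0, u_1, …, f_{ℓ−1}, u_ℓ with f_0 = e_c if (C,P) is a p-lollipop, and let H' be the subhypergraph with E(H') = E(H) − E(C) − E(P). Then for all 1 ≤ q ≤ ℓ−1 and 1 ≤ i, j ≤ c: (i) if u_q ∈ e_i and u_ℓ ∈ e_j, then j = i or |j − i| ≥ ℓ − q + 1; (ii) if {v_i, u_q} ⊆ e for some edge e ∈ (E(H') ∪ {f_0}) − E(C) and u_ℓ ∈ e_j, then either j > i and j − i ≥ ℓ − q + 1, or i > j and i − j ≥ ℓ − q + 2; (iii) if there exist distinct edges e, f ∈ (E(H') ∪ {f_0}) − E(C) with {v_i, u_q} ⊆ e and {v_j, u_ℓ} ⊆ f, then j = i or |j − i| ≥ ℓ − q + 2. -/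

import Mathlib

/-- A hypergraph on vertex type `α`: a finite vertex set together with a family of
distinct subsets of it, called edges. -/
structure BHypergraph (α : Type*) [DecidableEq α] where
  verts : Finset α
  edges : Finset (Finset α)
  edge_sub : ∀ e ∈ edges, e ⊆ verts

/-- A simple graph is 2-connected if it has at least 3 vertices, is connected, and
remains connected after deleting any single vertex. -/
def IsTwoConnectedGraph {V : Type*} (G : SimpleGraph V) : Prop :=
  3 ≤ Nat.card V ∧ G.Connected ∧
    ∀ x : V, ((⊤ : G.Subgraph).deleteVerts {x}).coe.Connected

namespace BHypergraph

variable {α : Type*} [DecidableEq α]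

/-- `H` is `r`-uniform: each edge has exactly `r` vertices. -/
def Uniform (H : BHypergraph α) (r : ℕ) : Prop := ∀ e ∈ H.edges, e.card = r

/-- The degree of a vertex: the number of edges containing it. -/
def degree (H : BHypergraph α) (v : α) : ℕ := (H.edges.filter (fun e => v ∈ e)).card

/-- The minimum degree of `H` is at least `k`. -/
def MinDegreeGE (H : BHypergraph α) (k : ℕ) : Prop := ∀ v ∈ H.verts, k ≤ H.degree v

/-- The vertex type of the incidence graph of `H`: vertices of `H` together with
edges of `H`. -/
def IncVert (H : BHypergraph α) : Type _ :=
  {x : α ⊕ Finset α // Sum.elim (fun v => v ∈ H.verts) (fun e => e ∈ H.edges) x}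

/-- The incidence (bipartite) graph of `H`: `v ∈ V(H)` is adjacent to `e ∈ E(H)`
iff `v ∈ e`. -/
def incidenceGraph (H : BHypergraph α) : SimpleGraph (IncVert H) where
  Adj x y := (∃ v e, x.1 = Sum.inl v ∧ y.1 = Sum.inr e ∧ v ∈ e) ∨
             (∃ v e, y.1 = Sum.inl v ∧ x.1 = Sum.inr e ∧ v ∈ e)
  symm := ⟨fun _ _ h => h.elim Or.inr Or.inl⟩
  loopless := ⟨by
    rintro x (⟨v, e, h1, h2, _⟩ | ⟨v, e, h1, h2, _⟩) <;> rw [h1] at h2 <;> simp at h2⟩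

/-- `H` is 2-connected iff its incidence graph is a 2-connected graph. -/
def TwoConnected (H : BHypergraph α) : Prop := IsTwoConnectedGraph H.incidenceGraph

/-- `H` contains a Berge cycle of length `c`: `c` distinct vertices `v_1, …, v_c` and
`c` distinct edges `e_1, …, e_c` with `{v_i, v_{i+1}} ⊆ e_i` (indices mod `c`). -/
def HasBergeCycle (H : BHypergraph α) (c : ℕ) : Prop :=
  2 ≤ c ∧ ∃ (v : ZMod c → α) (e : ZMod c → Finset α),
    Function.Injective v ∧ Function.Injective e ∧
    (∀ i, e i ∈ H.edges) ∧ (∀ i, v i ∈ e i) ∧ (∀ i, v (i + 1) ∈ e i)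

end BHypergraph

open BHypergraph

variable {α : Type*} [DecidableEq α]

/-- A Berge cycle of length `c` in `H`, with defining vertices `v i` and edges `e i`
indexed cyclically by `ZMod c`; edge `e i` contains `v i` and `v (i+1)`. -/
structure BergeCycle (H : BHypergraph α) (c : ℕ) where
  hc : 2 ≤ c
  v : ZMod c → α
  e : ZMod c → Finset α
  v_inj : Function.Injective v
  e_inj : Function.Injective e
  e_mem : ∀ i, e i ∈ H.edges
  mem_self : ∀ i, v i ∈ e i
  mem_succ : ∀ i, v (i + 1) ∈ e i

/-- The set of defining vertices of a Berge cycle. -/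
def BergeCycle.vset {H : BHypergraph α} {c : ℕ} (C : BergeCycle H c) : Finset α :=
  letI : NeZero c := ⟨by have h := C.hc; omega⟩
  Finset.image C.v Finset.univ

/-- The set of edges of a Berge cycle. -/
def BergeCycle.eset {H : BHypergraph α} {c : ℕ} (C : BergeCycle H c) : Finset (Finset α) :=
  letI : NeZero c := ⟨by have h := C.hc; omega⟩
  Finset.image C.e Finset.univ

/-- A Berge path `u 0, f 0, u 1, …, f (ℓ-1), u ℓ` in `H` with `ℓ` edges:
distinct vertices, distinct edges, and `{u i, u (i+1)} ⊆ f i`. -/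
structure BergePath (H : BHypergraph α) (ℓ : ℕ) where
  u : Fin (ℓ + 1) → α
  f : Fin ℓ → Finset α
  u_inj : Function.Injective u
  f_inj : Function.Injective f
  u_mem : ∀ i, u i ∈ H.verts
  f_mem : ∀ i, f i ∈ H.edges
  mem_cast : ∀ i : Fin ℓ, u i.castSucc ∈ f i
  mem_succ : ∀ i : Fin ℓ, u i.succ ∈ f i

def BergePath.vset {H : BHypergraph α} {ℓ : ℕ} (P : BergePath H ℓ) : Finset α :=
  Finset.image P.u Finset.univ

def BergePath.eset {H : BHypergraph α} {ℓ : ℕ} (P : BergePath H ℓ) : Finset (Finset α) :=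
  Finset.image P.f Finset.univ

/-- A partial Berge path `f_0, u_1, f_1, …, f_(ℓ-1), u_ℓ`, beginning with an edge:
here `u i` denotes the vertex `u_(i+1)` and `f i` denotes the edge `f_i`, so that
`u_1 ∈ f_0` and `{u_i, u_(i+1)} ⊆ f_i` for `1 ≤ i ≤ ℓ-1`. -/
structure PartialBergePath (H : BHypergraph α) (ℓ : ℕ) where
  u : Fin ℓ → α
  f : Fin ℓ → Finset α
  u_inj : Function.Injective u
  f_inj : Function.Injective f
  u_mem : ∀ i, u i ∈ H.verts
  f_mem : ∀ i, f i ∈ H.edges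
  mem_self : ∀ i : Fin ℓ, u i ∈ f i
  mem_next : ∀ (i : ℕ) (h : i + 1 < ℓ), u ⟨i, by omega⟩ ∈ f ⟨i + 1, h⟩

def PartialBergePath.vset {H : BHypergraph α} {ℓ : ℕ} (P : PartialBergePath H ℓ) : Finset α :=
  Finset.image P.u Finset.univ

def PartialBergePath.eset {H : BHypergraph α} {ℓ : ℕ} (P : PartialBergePath H ℓ) :
    Finset (Finset α) :=
  Finset.image P.f Finset.univ

/-- An ordinary lollipop (o-lollipop): a Berge cycle `C` together with a Berge path `P`
starting at a vertex of `C`, with `|V(C) ∩ V(P)| = 1` and `E(C) ∩ E(P) = ∅`. -/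
structure OLollipop (H : BHypergraph α) (c ℓ : ℕ) where
  C : BergeCycle H c
  P : BergePath H ℓ
  start_mem : P.u 0 ∈ C.vset
  inter_v : C.vset ∩ P.vset = {P.u 0}
  inter_e : C.eset ∩ P.eset = ∅

/-- A partial lollipop (p-lollipop): a Berge cycle `C` together with a partial Berge
path `P` whose first edge is an edge of `C`, with `V(C) ∩ V(P) = ∅` and
`E(C) ∩ E(P) = {f_0}`. -/
structure PLollipop (H : BHypergraph α) (c ℓ : ℕ) where
  hl : 1 ≤ ℓ
  C : BergeCycle H c
  P : PartialBergePath H ℓ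
  first_edge : P.f ⟨0, hl⟩ ∈ C.eset
  inter_v : C.vset ∩ P.vset = ∅
  inter_e : C.eset ∩ P.eset = {P.f ⟨0, hl⟩}

/-- A lollipop of `H` is either an o-lollipop or a p-lollipop. -/
inductive Lollipop (H : BHypergraph α) : Type _ where
  | o : (c ℓ : ℕ) → OLollipop H c ℓ → Lollipop H
  | p : (c ℓ : ℕ) → PLollipop H c ℓ → Lollipop H

namespace Lollipop

variable {H : BHypergraph α}

/-- The set of defining vertices of the cycle of a lollipop. -/
def cycVset : Lollipop H → Finset α
  | .o _ _ L => L.C.vset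
  | .p _ _ L => L.C.vset

/-- The set of edges of the cycle of a lollipop. -/
def cycEset : Lollipop H → Finset (Finset α)
  | .o _ _ L => L.C.eset
  | .p _ _ L => L.C.eset

/-- The set of vertices of the path of a lollipop. -/
def pathVset : Lollipop H → Finset α
  | .o _ _ L => L.P.vset
  | .p _ _ L => L.P.vset

/-- The set of edges of the path of a lollipop. -/
def pathEset : Lollipop H → Finset (Finset α)
  | .o _ _ L => L.P.eset
  | .p _ _ L => L.P.eset

/-- `|V(P) − V(C)|`. -/
def pGain (L : Lollipop H) : ℕ := (L.pathVset \ L.cycVset).card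

/-- The number of incidences between vertices of `V(P) − V(C)` and edges of
`E(C) − E(P)`, counted with multiplicity. -/
def incCount (L : Lollipop H) : ℕ :=
  ∑ e ∈ (L.cycEset \ L.pathEset), (e ∩ (L.pathVset \ L.cycVset)).card

/-- The number of edges of `E(P) − E(C)` entirely contained in `V(P) − V(C)`. -/
def contCount (L : Lollipop H) : ℕ :=
  ((L.pathEset \ L.cycEset).filter (fun e => e ⊆ L.pathVset \ L.cycVset)).card

/-- 1-good: the cycle is as long as possible among all lollipops. -/
def Good1 (L : Lollipop H) : Prop := ∀ L' : Lollipop H, L'.cycVset.card ≤ L.cycVset.card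

/-- 2-good: lexicographically maximizes `(|V(C)|, |V(P)−V(C)|)`. -/
def Good2 (L : Lollipop H) : Prop :=
  L.Good1 ∧ ∀ L' : Lollipop H, L'.cycVset.card = L.cycVset.card → L'.pGain ≤ L.pGain

/-- 3-good. -/
def Good3 (L : Lollipop H) : Prop :=
  L.Good2 ∧ ∀ L' : Lollipop H, L'.cycVset.card = L.cycVset.card → L'.pGain = L.pGain →
    L'.incCount ≤ L.incCount

/-- 4-good (best). -/
def Good4 (L : Lollipop H) : Prop :=
  L.Good3 ∧ ∀ L' : Lollipop H, L'.cycVset.card = L.cycVset.card → L'.pGain = L.pGain →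
    L'.incCount = L.incCount → L'.contCount ≤ L.contCount

end Lollipop

/-- A disjoint cycle-path pair (dcp-pair): a Berge cycle and a Berge path having no
common edges and such that no defining vertex of the cycle is a vertex of the path. -/
structure DcpPair (H : BHypergraph α) where
  c : ℕ
  l : ℕ
  C : BergeCycle H c
  P : BergePath H l
  disj_v : Disjoint C.vset P.vset
  disj_e : Disjoint C.eset P.eset

namespace DcpPair

variable {H : BHypergraph α}

/-- The number of incidences between vertices of `V(P)` and edges of `E(C)`,
counted with multiplicity. -/
def incCount (D : DcpPair H) : ℕ := ∑ e ∈ D.C.eset, (e ∩ D.P.vset).card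

/-- The number of edges of `E(P)` entirely contained in `V(P)`. -/
def contCount (D : DcpPair H) : ℕ := (D.P.eset.filter (fun e => e ⊆ D.P.vset)).card

/-- 1-good dcp-pair. -/
def Good1 (D : DcpPair H) : Prop := ∀ D' : DcpPair H, D'.C.vset.card ≤ D.C.vset.card

/-- 2-good dcp-pair: lexicographically maximizes `(|V(C)|, |V(P)|)`. -/
def Good2 (D : DcpPair H) : Prop :=
  D.Good1 ∧ ∀ D' : DcpPair H, D'.C.vset.card = D.C.vset.card →
    D'.P.vset.card ≤ D.P.vset.card

/-- 3-good dcp-pair. -/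
def Good3 (D : DcpPair H) : Prop :=
  D.Good2 ∧ ∀ D' : DcpPair H, D'.C.vset.card = D.C.vset.card →
    D'.P.vset.card = D.P.vset.card → D'.incCount ≤ D.incCount

/-- 4-good dcp-pair. -/
def Good4 (D : DcpPair H) : Prop :=
  D.Good3 ∧ ∀ D' : DcpPair H, D'.C.vset.card = D.C.vset.card →
    D'.P.vset.card = D.P.vset.card → D'.incCount = D.incCount →
    D'.contCount ≤ D.contCount

end DcpPair

/-- The `E'`-neighborhood of a vertex `x`: all vertices `w` such that some edge of `E'`
contains both `x` and `w`. -/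
def nbhd (E' : Finset (Finset α)) (x : α) : Finset α :=
  (E'.filter (fun e => x ∈ e)).biUnion id

namespace BergeCycle

variable {α : Type*} [DecidableEq α] {H : BHypergraph α} {c : ℕ}

lemma neZero (C : BergeCycle H c) : NeZero c := ⟨by have := C.hc; omega⟩

lemma mem_vset (C : BergeCycle H c) (x : ZMod c) : C.v x ∈ C.vset := by
  haveI := C.neZero
  simp only [BergeCycle.vset]
  exact Finset.mem_image_of_mem _ (Finset.mem_univ x)

lemma mem_eset (C : BergeCycle H c) (x : ZMod c) : C.e x ∈ C.eset := by
  haveI := C.neZero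
  simp only [BergeCycle.eset]
  exact Finset.mem_image_of_mem _ (Finset.mem_univ x)

end BergeCycle
section Key

variable {α : Type*} [DecidableEq α] {H : BHypergraph α}

lemma cast_bound_inj {c i j : ℕ} (hi1 : 1 ≤ i) (hi2 : i ≤ c) (hj1 : 1 ≤ j) (hj2 : j ≤ c)
    (h : (i : ZMod c) = (j : ZMod c)) : i = j := by
  have h' : i % c = j % c := (ZMod.natCast_eq_natCast_iff i j c).mp h
  rcases eq_or_lt_of_le hi2 with rfl | hi
  · rw [Nat.mod_self] at h'
    rcases eq_or_lt_of_le hj2 with rfl | hj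
    · rfl
    · rw [Nat.mod_eq_of_lt hj] at h'; omega
  · rw [Nat.mod_eq_of_lt hi] at h'
    rcases eq_or_lt_of_le hj2 with rfl | hj
    · rw [Nat.mod_self] at h'; omega
    · rw [Nat.mod_eq_of_lt hj] at h'; omega

lemma cast_eq_zero_bound {c x : ℕ} (h1 : 1 ≤ x) (h2 : x < c)
    (h : (x : ZMod c) = 0) : False := by
  have h' : x % c = 0 % c := (ZMod.natCast_eq_natCast_iff x 0 c).mp (by simpa using h)
  rw [Nat.mod_eq_of_lt h2, Nat.zero_mod] at h'; omega

lemma keyA {c : ℕ} (C : BergeCycle H c) (a : ZMod c) (d k : ℕ)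
    (hd1 : 1 ≤ d) (hd2 : d ≤ c)
    (w : Fin (k+1) → α) (g : Fin (k+2) → Finset α)
    (hw_inj : Function.Injective w)
    (hw_not : ∀ p, w p ∉ C.vset)
    (hg_inj : Function.Injective g)
    (hg_mem : ∀ p, g p ∈ H.edges)
    (hg_arc : ∀ p, ∀ x : ℕ, x < c - d → g p ≠ C.e (a + ((d + x : ℕ) : ZMod c)))
    (h0v : C.v a ∈ g ⟨0, by omega⟩)
    (hga : ∀ p (h : p < k+1), w ⟨p, h⟩ ∈ g ⟨p + 1, by omega⟩)
    (hgb : ∀ p (h : p < k+1), w ⟨p, h⟩ ∈ g ⟨p, by omega⟩)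
    (hlastv : C.v (a + ((d : ℕ) : ZMod c)) ∈ g ⟨k + 1, by omega⟩) :
    H.HasBergeCycle (c - d + k + 2) := by
  haveI := C.neZero
  have hc2 := C.hc
  set M := c - d + k + 2 with hM
  haveI : NeZero M := ⟨by omega⟩
  have hM2 : 2 ≤ M := by omega
  have harcv : ∀ x y : ℕ, x < c - d → y < c - d →
      C.v (a + ((d + x : ℕ) : ZMod c)) = C.v (a + ((d + y : ℕ) : ZMod c)) → x = y := by
    intro x y hx hy hxy
    have h1 := C.v_inj hxy
    have h2 : ((d + x : ℕ) : ZMod c) = ((d + y : ℕ) : ZMod c) := add_left_cancel h1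
    have := cast_bound_inj (c := c) (by omega) (by omega) (by omega) (by omega) h2
    omega
  have harce : ∀ x y : ℕ, x < c - d → y < c - d →
      C.e (a + ((d + x : ℕ) : ZMod c)) = C.e (a + ((d + y : ℕ) : ZMod c)) → x = y := by
    intro x y hx hy hxy
    have h1 := C.e_inj hxy
    have h2 : ((d + x : ℕ) : ZMod c) = ((d + y : ℕ) : ZMod c) := add_left_cancel h1
    have := cast_bound_inj (c := c) (by omega) (by omega) (by omega) (by omega) h2
    omega
  have hva : ∀ x : ℕ, x < c - d → C.v a ≠ C.v (a + ((d + x : ℕ) : ZMod c)) := by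
    intro x hx h
    have h1 := C.v_inj h
    have h2 : ((d + x : ℕ) : ZMod c) = 0 := by
      have h3 : a + ((d + x : ℕ) : ZMod c) = a + 0 := by rw [add_zero]; exact h1.symm
      exact add_left_cancel h3
    exact cast_eq_zero_bound (by omega) (by omega) h2
  have hsucc : ∀ z : ZMod M, (z + 1).val = if z.val + 1 = M then 0 else z.val + 1 := by
    intro z
    rw [ZMod.val_add, ZMod.val_one_eq_one_mod, Nat.mod_eq_of_lt (show 1 < M by omega)]
    by_cases hzm : z.val + 1 = M
    · simp [hzm]
    · rw [Nat.mod_eq_of_lt (by have := ZMod.val_lt z; omega), if_neg hzm]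
  refine ⟨hM2,
    fun i => if i.val = 0 then C.v a else
      if h : i.val ≤ k + 1 then w ⟨i.val - 1, by omega⟩
      else C.v (a + ((d + (i.val - (k+2)) : ℕ) : ZMod c)),
    fun i => if h : i.val ≤ k + 1 then g ⟨i.val, by omega⟩
      else C.e (a + ((d + (i.val - (k+2)) : ℕ) : ZMod c)),
    ?_, ?_, ?_, ?_, ?_⟩
  · -- v injective
    intro x y h
    have hx := ZMod.val_lt x
    have hy := ZMod.val_lt y
    apply ZMod.val_injective
    simp only at h
    split_ifs at h with h1 h2 h3 h4 h5 h6 h7 h8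
    · omega
    · exact absurd (h ▸ C.mem_vset a) (hw_not _)
    · exact absurd h (hva _ (by omega))
    · exact absurd (h.symm ▸ C.mem_vset a) (hw_not _)
    · have := hw_inj h
      rw [Fin.mk.injEq] at this
      omega
    · exact absurd (h.symm ▸ C.mem_vset _) (hw_not _)
    · exact absurd h.symm (hva _ (by omega))
    · exact absurd (h ▸ C.mem_vset _) (hw_not _)
    · have := harcv _ _ (by omega) (by omega) h
      omega
  · -- e injective
    intro x y h
    have hx := ZMod.val_lt x
    have hy := ZMod.val_lt y
    apply ZMod.val_injective
    simp only at h
    split_ifs at h with h1 h2 h3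
    · have := hg_inj h
      rw [Fin.mk.injEq] at this
      omega
    · exact absurd h (hg_arc _ _ (by omega))
    · exact absurd h.symm (hg_arc _ _ (by omega))
    · have := harce _ _ (by omega) (by omega) h
      omega
  · -- edges in H
    intro i
    simp only
    split_ifs
    · exact hg_mem _
    · exact C.e_mem _
  · -- v i ∈ e i
    intro i
    have hiv := ZMod.val_lt i
    simp only
    split_ifs with h1 h2 h3
    · simp only [h2]
      exact h0v
    · have := hga (i.val - 1) (by omega)
      simpa only [show i.val - 1 + 1 = i.val from by omega] using this
    · exact absurd (show i.val ≤ k + 1 by omega) h1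
    · exact C.mem_self _
  · -- v (i+1) ∈ e i
    intro i
    have hiv := ZMod.val_lt i
    have h1 := hsucc i
    simp only
    by_cases hend : i.val + 1 = M
    · rw [if_pos hend] at h1
      simp only [h1, ↓reduceIte]
      by_cases hcd : c ≤ d
      · rw [dif_pos (show i.val ≤ k + 1 by omega)]
        have hik : i.val = k + 1 := by omega
        have h2 : ((d : ℕ) : ZMod c) = 0 := by
          rw [show d = c from by omega]; exact ZMod.natCast_self c
        rw [h2, add_zero] at hlastv
        simp only [hik]
        exact hlastv
      · rw [dif_neg (show ¬ i.val ≤ k + 1 by omega)]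
        have hx : i.val - (k + 2) = c - d - 1 := by omega
        have h2 : a + ((d + (i.val - (k+2)) : ℕ) : ZMod c) + 1 = a := by
          have h3 : (((d + (i.val - (k+2)) + 1 : ℕ)) : ZMod c) = 0 := by
            rw [show d + (i.val - (k+2)) + 1 = c from by omega]
            exact ZMod.natCast_self c
          calc a + ((d + (i.val - (k+2)) : ℕ) : ZMod c) + 1
              = a + (((d + (i.val - (k+2)) + 1 : ℕ)) : ZMod c) := by push_cast; ring
            _ = a := by rw [h3, add_zero]
        have := C.mem_succ (a + ((d + (i.val - (k+2)) : ℕ) : ZMod c))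
        rw [h2] at this
        exact this
    · rw [if_neg hend] at h1
      simp only [h1, if_neg (show ¬ i.val + 1 = 0 by omega)]
      by_cases hk : i.val ≤ k
      · rw [dif_pos (show i.val + 1 ≤ k + 1 by omega), dif_pos (show i.val ≤ k + 1 by omega)]
        have := hgb i.val (by omega)
        simpa only [Nat.add_sub_cancel] using this
      · by_cases hk1 : i.val = k + 1
        · rw [dif_neg (show ¬ i.val + 1 ≤ k + 1 by omega), dif_pos (show i.val ≤ k + 1 by omega)]
          simp only [hk1, show k + 1 + 1 - (k+2) = 0 from by omega, Nat.add_zero]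
          exact hlastv
        · rw [dif_neg (show ¬ i.val + 1 ≤ k + 1 by omega), dif_neg (show ¬ i.val ≤ k + 1 by omega)]
          have h2 : a + ((d + (i.val - (k+2)) : ℕ) : ZMod c) + 1
              = a + ((d + (i.val + 1 - (k+2)) : ℕ) : ZMod c) := by
            rw [show i.val + 1 - (k+2) = i.val - (k+2) + 1 from by omega]
            push_cast
            ring
          have := C.mem_succ (a + ((d + (i.val - (k+2)) : ℕ) : ZMod c))
          rw [h2] at this
          exact this

end Key
section Rev

variable {α : Type*} [DecidableEq α] {H : BHypergraph α} {c : ℕ}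

/-- The reverse of a Berge cycle. -/
def BergeCycle.reverse (C : BergeCycle H c) : BergeCycle H c where
  hc := C.hc
  v := fun x => C.v (-x)
  e := fun x => C.e (-1 - x)
  v_inj := fun x y h => neg_injective (C.v_inj h)
  e_inj := fun x y h => by
    have h2 := C.e_inj h
    rw [sub_eq_add_neg, sub_eq_add_neg] at h2
    exact neg_injective (add_left_cancel h2)
  e_mem := fun x => C.e_mem _
  mem_self := fun x => by
    have h := C.mem_succ (-1 - x)
    rwa [show (-1 : ZMod c) - x + 1 = -x from by ring] at h
  mem_succ := fun x => by
    show C.v (-(x + 1)) ∈ C.e (-1 - x)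
    rw [show -(x + 1) = (-1 : ZMod c) - x from by ring]
    exact C.mem_self _

@[simp] lemma BergeCycle.reverse_v (C : BergeCycle H c) (x : ZMod c) :
    C.reverse.v x = C.v (-x) := rfl

@[simp] lemma BergeCycle.reverse_e (C : BergeCycle H c) (x : ZMod c) :
    C.reverse.e x = C.e (-1 - x) := rfl

@[simp] lemma BergeCycle.reverse_vset (C : BergeCycle H c) :
    C.reverse.vset = C.vset := by
  haveI := C.neZero
  simp only [BergeCycle.vset]
  ext z
  simp only [Finset.mem_image, Finset.mem_univ, true_and]
  constructor
  · rintro ⟨x, hx⟩; exact ⟨-x, hx⟩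
  · rintro ⟨x, hx⟩; exact ⟨-x, by simpa using hx⟩

@[simp] lemma BergeCycle.reverse_eset (C : BergeCycle H c) :
    C.reverse.eset = C.eset := by
  haveI := C.neZero
  simp only [BergeCycle.eset]
  ext z
  simp only [Finset.mem_image, Finset.mem_univ, true_and]
  constructor
  · rintro ⟨x, hx⟩; exact ⟨-1 - x, hx⟩
  · rintro ⟨x, hx⟩
    refine ⟨-1 - x, ?_⟩
    show C.e (-1 - (-1 - x)) = z
    rwa [show (-1 : ZMod c) - (-1 - x) = x from by ring]

lemma keyB (C : BergeCycle H c) (hmax : ∀ m, H.HasBergeCycle m → m ≤ c)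
    {k : ℕ} (t : Fin (k+1) → α) (s : Fin k → Finset α)
    (ht_inj : Function.Injective t) (ht_not : ∀ p, t p ∉ C.vset)
    (hs_inj : Function.Injective s) (hs_mem : ∀ p, s p ∈ H.edges)
    (hs_not : ∀ p, s p ∉ C.eset)
    (hts1 : ∀ p : Fin k, t p.castSucc ∈ s p) (hts2 : ∀ p : Fin k, t p.succ ∈ s p)
    (a : ZMod c) (d : ℕ) (hd1 : 1 ≤ d) (hd2 : d ≤ c)
    (G0 Gk1 : Finset α) (hG0m : G0 ∈ H.edges) (hGk1m : Gk1 ∈ H.edges)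
    (hGne : G0 ≠ Gk1) (hG0s : ∀ p, G0 ≠ s p) (hGk1s : ∀ p, Gk1 ≠ s p)
    (hG0arc : ∀ x : ℕ, x < c - d → G0 ≠ C.e (a + ((d + x : ℕ) : ZMod c)))
    (hGk1arc : ∀ x : ℕ, x < c - d → Gk1 ≠ C.e (a + ((d + x : ℕ) : ZMod c)))
    (h0v : C.v a ∈ G0) (h0w : t 0 ∈ G0)
    (hlw : t (Fin.last k) ∈ Gk1) (hlv : C.v (a + ((d : ℕ) : ZMod c)) ∈ Gk1) :
    k + 2 ≤ d := by
  classical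
  set g : Fin (k+2) → Finset α := fun p =>
    if h0 : (p : ℕ) = 0 then G0 else if h : (p : ℕ) ≤ k then s ⟨(p : ℕ) - 1, by omega⟩
    else Gk1 with hg
  have hgval : ∀ p : Fin (k+2), ((p : ℕ) = 0 → g p = G0) ∧
      (∀ (hp1 : 1 ≤ (p : ℕ)) (hp2 : (p : ℕ) ≤ k), g p = s ⟨(p : ℕ) - 1, by omega⟩) ∧
      ((p : ℕ) = k + 1 → g p = Gk1) := by
    intro p
    refine ⟨fun h => by simp only [hg]; rw [dif_pos h], fun h1 h2 => by
      simp only [hg]; rw [dif_neg (by omega), dif_pos h2], fun h => by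
      simp only [hg]; rw [dif_neg (by omega), dif_neg (by omega)]⟩
  have hbc := keyA C a d k hd1 hd2 t g ht_inj ht_not ?_ ?_ ?_ ?_ ?_ ?_ ?_
  · have := hmax _ hbc
    omega
  · -- g injective
    intro x y h
    have hx := x.2
    have hy := y.2
    obtain ⟨hx0, hxm, hxl⟩ := hgval x
    obtain ⟨hy0, hym, hyl⟩ := hgval y
    by_cases e1 : (x : ℕ) = 0 <;> by_cases e2 : (y : ℕ) = 0
    · exact Fin.ext (by omega)
    · by_cases e3 : (y : ℕ) ≤ k
      · rw [hx0 e1, hym (by omega) e3] at h; exact absurd h (hG0s _)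
      · rw [hx0 e1, hyl (by omega)] at h; exact absurd h hGne
    · by_cases e3 : (x : ℕ) ≤ k
      · rw [hy0 e2, hxm (by omega) e3] at h; exact absurd h.symm (hG0s _)
      · rw [hy0 e2, hxl (by omega)] at h; exact absurd h.symm hGne
    · by_cases e3 : (x : ℕ) ≤ k <;> by_cases e4 : (y : ℕ) ≤ k
      · rw [hxm (by omega) e3, hym (by omega) e4] at h
        have := hs_inj h
        rw [Fin.mk.injEq] at this
        exact Fin.ext (by omega)
      · rw [hxm (by omega) e3, hyl (by omega)] at h; exact absurd h.symm (hGk1s _)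
      · rw [hxl (by omega), hym (by omega) e4] at h; exact absurd h (hGk1s _)
      · exact Fin.ext (by omega)
  · -- g mem
    intro p
    obtain ⟨hp0, hpm, hpl⟩ := hgval p
    have hp := p.2
    by_cases e1 : (p : ℕ) = 0
    · rw [hp0 e1]; exact hG0m
    · by_cases e2 : (p : ℕ) ≤ k
      · rw [hpm (by omega) e2]; exact hs_mem _
      · rw [hpl (by omega)]; exact hGk1m
  · -- g avoids the arc
    intro p x hx
    obtain ⟨hp0, hpm, hpl⟩ := hgval p
    have hp := p.2
    by_cases e1 : (p : ℕ) = 0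
    · rw [hp0 e1]; exact hG0arc x hx
    · by_cases e2 : (p : ℕ) ≤ k
      · rw [hpm (by omega) e2]
        intro h
        exact hs_not _ (h ▸ C.mem_eset _)
      · rw [hpl (by omega)]; exact hGk1arc x hx
  · -- C.v a ∈ g 0
    rw [(hgval _).1 rfl]; exact h0v
  · -- hga
    intro p hp
    by_cases e1 : p < k
    · rw [(hgval ⟨p+1, by omega⟩).2.1 (show 1 ≤ p + 1 by omega) (show p + 1 ≤ k by omega)]
      have := hts1 ⟨p, e1⟩
      simpa only [Fin.castSucc_mk, Nat.add_sub_cancel] using this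
    · have hpk : p = k := by omega
      subst hpk
      rw [(hgval ⟨p+1, by omega⟩).2.2 rfl]
      have hl : (⟨p, hp⟩ : Fin (p+1)) = Fin.last p := rfl
      rw [hl]
      exact hlw
  · -- hgb
    intro p hp
    by_cases e1 : p = 0
    · subst e1
      rw [(hgval ⟨0, by omega⟩).1 rfl]
      exact h0w
    · rw [(hgval ⟨p, by omega⟩).2.1 (show 1 ≤ p by omega) (show p ≤ k by omega)]
      have := hts2 ⟨p - 1, by omega⟩
      simpa only [Fin.succ_mk, show p - 1 + 1 = p from by omega] using this
  · -- hlastv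
    rw [(hgval ⟨k+1, by omega⟩).2.2 rfl]
    exact hlv

end Rev
section Cor

variable {α : Type*} [DecidableEq α] {H : BHypergraph α} {c : ℕ}

lemma e_ne_shift (C : BergeCycle H c) (a : ZMod c) {m : ℕ} (h1 : 1 ≤ m) (h2 : m < c) :
    C.e a ≠ C.e (a + (m : ZMod c)) := by
  intro h
  have h3 : (m : ZMod c) = 0 := by
    have h4 : a + (m : ZMod c) = a + 0 := by rw [add_zero]; exact (C.e_inj h).symm
    exact add_left_cancel h4
  exact cast_eq_zero_bound h1 h2 h3

lemma e_arc_ne (C : BergeCycle H c) (a : ZMod c) {d x : ℕ} (hd : 1 ≤ d) (hx : x < c - d) :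
    C.e a ≠ C.e (a + ((d + x : ℕ) : ZMod c)) :=
  e_ne_shift C a (by omega) (by omega)

lemma e_arc_ne' (C : BergeCycle H c) (a : ZMod c) {d x : ℕ} (hd : 1 ≤ d) (hx : x < c - d) :
    C.e (a + ((d - 1 : ℕ) : ZMod c)) ≠ C.e (a + ((d + x : ℕ) : ZMod c)) := by
  have h := e_ne_shift C (a + ((d - 1 : ℕ) : ZMod c)) (m := x + 1) (by omega) (by omega)
  intro h2
  apply h
  rw [h2]
  congr 1
  rw [show d + x = (d - 1) + (x + 1) from by omega]
  push_cast
  ring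

lemma v_succ_arc (C : BergeCycle H c) (a : ZMod c) {d : ℕ} (hd : 1 ≤ d) :
    C.v (a + ((d : ℕ) : ZMod c)) ∈ C.e (a + ((d - 1 : ℕ) : ZMod c)) := by
  have hcast : ((d - 1 : ℕ) : ZMod c) + 1 = ((d : ℕ) : ZMod c) := by
    have h2 : ((d - 1 + 1 : ℕ) : ZMod c) = ((d : ℕ) : ZMod c) := by
      norm_num [show d - 1 + 1 = d from by omega]
    rw [← h2]; push_cast; ring
  have h := C.mem_succ (a + ((d - 1 : ℕ) : ZMod c))
  rwa [add_assoc, hcast] at h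

variable (C : BergeCycle H c) {k : ℕ} (t : Fin (k+1) → α) (s : Fin k → Finset α)

lemma cor1 (hmax : ∀ m, H.HasBergeCycle m → m ≤ c)
    (ht_inj : Function.Injective t) (ht_not : ∀ p, t p ∉ C.vset)
    (hs_inj : Function.Injective s) (hs_mem : ∀ p, s p ∈ H.edges)
    (hs_not : ∀ p, s p ∉ C.eset)
    (hts1 : ∀ p : Fin k, t p.castSucc ∈ s p) (hts2 : ∀ p : Fin k, t p.succ ∈ s p)
    (a : ZMod c) (d : ℕ) (hd1 : 2 ≤ d) (hd2 : d ≤ c)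
    (h0 : t 0 ∈ C.e a) (hl : t (Fin.last k) ∈ C.e (a + ((d - 1 : ℕ) : ZMod c))) :
    k + 2 ≤ d := by
  haveI := C.neZero
  have hc2 := C.hc
  exact keyB C hmax t s ht_inj ht_not hs_inj hs_mem hs_not hts1 hts2 a d (by omega) hd2
    (C.e a) (C.e (a + ((d - 1 : ℕ) : ZMod c))) (C.e_mem _) (C.e_mem _)
    (e_ne_shift C a (by omega) (by omega))
    (fun p h => hs_not p (h ▸ C.mem_eset _)) (fun p h => hs_not p (h ▸ C.mem_eset _))
    (fun x hx => e_arc_ne C a (by omega) hx) (fun x hx => e_arc_ne' C a (by omega) hx)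
    (C.mem_self a) h0 hl (v_succ_arc C a (by omega))

lemma cor2 (hmax : ∀ m, H.HasBergeCycle m → m ≤ c)
    (ht_inj : Function.Injective t) (ht_not : ∀ p, t p ∉ C.vset)
    (hs_inj : Function.Injective s) (hs_mem : ∀ p, s p ∈ H.edges)
    (hs_not : ∀ p, s p ∉ C.eset)
    (hts1 : ∀ p : Fin k, t p.castSucc ∈ s p) (hts2 : ∀ p : Fin k, t p.succ ∈ s p)
    (a : ZMod c) (d : ℕ) (hd1 : 1 ≤ d) (hd2 : d ≤ c)
    (e : Finset α) (hem : e ∈ H.edges) (henc : e ∉ C.eset) (hens : ∀ p, e ≠ s p)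
    (hev : C.v a ∈ e) (het : t 0 ∈ e)
    (hl : t (Fin.last k) ∈ C.e (a + ((d - 1 : ℕ) : ZMod c))) :
    k + 2 ≤ d := by
  haveI := C.neZero
  have hc2 := C.hc
  exact keyB C hmax t s ht_inj ht_not hs_inj hs_mem hs_not hts1 hts2 a d hd1 hd2
    e (C.e (a + ((d - 1 : ℕ) : ZMod c))) hem (C.e_mem _)
    (fun h => henc (h ▸ C.mem_eset _)) hens (fun p h => hs_not p (h ▸ C.mem_eset _))
    (fun x _ h => henc (h ▸ C.mem_eset _)) (fun x hx => e_arc_ne' C a (by omega) hx)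
    hev het hl (v_succ_arc C a (by omega))

lemma cor3 (hmax : ∀ m, H.HasBergeCycle m → m ≤ c)
    (ht_inj : Function.Injective t) (ht_not : ∀ p, t p ∉ C.vset)
    (hs_inj : Function.Injective s) (hs_mem : ∀ p, s p ∈ H.edges)
    (hs_not : ∀ p, s p ∉ C.eset)
    (hts1 : ∀ p : Fin k, t p.castSucc ∈ s p) (hts2 : ∀ p : Fin k, t p.succ ∈ s p)
    (a : ZMod c) (d : ℕ) (hd1 : 1 ≤ d) (hd2 : d ≤ c)
    (e : Finset α) (hem : e ∈ H.edges) (henc : e ∉ C.eset) (hens : ∀ p, e ≠ s p)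
    (f : Finset α) (hfm : f ∈ H.edges) (hfnc : f ∉ C.eset) (hfns : ∀ p, f ≠ s p)
    (hef : e ≠ f)
    (hev : C.v a ∈ e) (het : t 0 ∈ e)
    (hfv : C.v (a + ((d : ℕ) : ZMod c)) ∈ f) (hft : t (Fin.last k) ∈ f) :
    k + 2 ≤ d := by
  haveI := C.neZero
  have hc2 := C.hc
  exact keyB C hmax t s ht_inj ht_not hs_inj hs_mem hs_not hts1 hts2 a d hd1 hd2
    e f hem hfm hef hens hfns
    (fun x _ h => henc (h ▸ C.mem_eset _)) (fun x _ h => hfnc (h ▸ C.mem_eset _))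
    hev het hft hfv

end Cor
section Tail

variable {α : Type*} [DecidableEq α] {H : BHypergraph α}

lemma tailClaims {c : ℕ} (C : BergeCycle H c) (hmax : ∀ m, H.HasBergeCycle m → m ≤ c)
    {k : ℕ} (hk : 1 ≤ k) (t : Fin (k+1) → α) (s : Fin k → Finset α)
    (ht_inj : Function.Injective t) (ht_not : ∀ p, t p ∉ C.vset)
    (hs_inj : Function.Injective s) (hs_mem : ∀ p, s p ∈ H.edges)
    (hs_not : ∀ p, s p ∉ C.eset)
    (hts1 : ∀ p : Fin k, t p.castSucc ∈ s p) (hts2 : ∀ p : Fin k, t p.succ ∈ s p)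
    (i j : ℕ) (hi1 : 1 ≤ i) (hi2 : i ≤ c) (hj1 : 1 ≤ j) (hj2 : j ≤ c) :
    (t 0 ∈ C.e (i : ZMod c) → t (Fin.last k) ∈ C.e (j : ZMod c) →
      j = i ∨ k + 1 ≤ Nat.dist j i) ∧
    (∀ e, e ∈ H.edges → e ∉ C.eset → (∀ p, e ≠ s p) →
      C.v (i : ZMod c) ∈ e → t 0 ∈ e → t (Fin.last k) ∈ C.e (j : ZMod c) →
      (i < j ∧ k + 1 ≤ j - i) ∨ (j < i ∧ k + 2 ≤ i - j)) ∧
    (∀ e, e ∈ H.edges → e ∉ C.eset → (∀ p, e ≠ s p) →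
     ∀ f, f ∈ H.edges → f ∉ C.eset → (∀ p, f ≠ s p) → e ≠ f →
      C.v (i : ZMod c) ∈ e → t 0 ∈ e → C.v (j : ZMod c) ∈ f → t (Fin.last k) ∈ f →
      j = i ∨ k + 2 ≤ Nat.dist j i) := by
  haveI := C.neZero
  have hc2 := C.hc
  have ht_not' : ∀ p, t p ∉ C.reverse.vset := by
    intro p; rw [C.reverse_vset]; exact ht_not p
  have hs_not' : ∀ p, s p ∉ C.reverse.eset := by
    intro p; rw [C.reverse_eset]; exact hs_not p
  have hdist : Nat.dist j i = j - i + (i - j) := rfl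
  have ev0 : C.reverse.v (-(i : ZMod c)) = C.v (i : ZMod c) := by
    rw [C.reverse_v, neg_neg]
  refine ⟨?_, ?_, ?_⟩
  · -- part (i)
    intro h0 hl
    by_cases hij : j = i
    · exact Or.inl hij
    right
    rcases Nat.lt_or_ge i j with hlt | hge
    · have e1 : (i : ZMod c) + ((j - i + 1 - 1 : ℕ) : ZMod c) = (j : ZMod c) := by
        rw [show j - i + 1 - 1 = j - i from by omega, Nat.cast_sub (by omega)]
        ring
      have hc := cor1 C t s hmax ht_inj ht_not hs_inj hs_mem hs_not hts1 hts2
        (i : ZMod c) (j - i + 1) (by omega) (by omega) h0 (by rw [e1]; exact hl)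
      omega
    · have hlt : j < i := by omega
      have e0 : C.reverse.e (-1 - (i : ZMod c)) = C.e (i : ZMod c) := by
        rw [C.reverse_e]; congr 1; ring
      have e1 : C.reverse.e ((-1 - (i : ZMod c)) + ((i - j + 1 - 1 : ℕ) : ZMod c))
          = C.e (j : ZMod c) := by
        rw [C.reverse_e]; congr 1
        rw [show i - j + 1 - 1 = i - j from by omega, Nat.cast_sub (by omega)]
        ring
      have hc := cor1 C.reverse t s hmax ht_inj ht_not' hs_inj hs_mem hs_not' hts1 hts2
        (-1 - (i : ZMod c)) (i - j + 1) (by omega) (by omega)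
        (by rw [e0]; exact h0) (by rw [e1]; exact hl)
      omega
  · -- part (ii)
    intro e hem henc hens hev het hl
    rcases Nat.lt_trichotomy i j with hlt | heq | hgt
    · have e1 : (i : ZMod c) + ((j - i + 1 - 1 : ℕ) : ZMod c) = (j : ZMod c) := by
        rw [show j - i + 1 - 1 = j - i from by omega, Nat.cast_sub (by omega)]
        ring
      have hc := cor2 C t s hmax ht_inj ht_not hs_inj hs_mem hs_not hts1 hts2
        (i : ZMod c) (j - i + 1) (by omega) (by omega) e hem henc hens hev het
        (by rw [e1]; exact hl)
      exact Or.inl ⟨hlt, by omega⟩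
    · subst heq
      have e1 : (i : ZMod c) + ((1 - 1 : ℕ) : ZMod c) = (i : ZMod c) := by
        norm_num
      have hc := cor2 C t s hmax ht_inj ht_not hs_inj hs_mem hs_not hts1 hts2
        (i : ZMod c) 1 le_rfl (by omega) e hem henc hens hev het
        (by rw [e1]; exact hl)
      omega
    · have e1 : C.reverse.e ((-(i : ZMod c)) + ((i - j - 1 : ℕ) : ZMod c))
          = C.e (j : ZMod c) := by
        rw [C.reverse_e]; congr 1
        rw [show i - j - 1 = i - (j + 1) from by omega, Nat.cast_sub (by omega)]
        push_cast
        ring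
      have hc := cor2 C.reverse t s hmax ht_inj ht_not' hs_inj hs_mem hs_not' hts1 hts2
        (-(i : ZMod c)) (i - j) (by omega) (by omega) e hem
        (by rw [C.reverse_eset]; exact henc) hens (by rw [ev0]; exact hev) het
        (by rw [e1]; exact hl)
      exact Or.inr ⟨hgt, by omega⟩
  · -- part (iii)
    intro e hem henc hens f hfm hfnc hfns hef hev het hfv hft
    rcases Nat.lt_trichotomy i j with hlt | heq | hgt
    · have e1 : (i : ZMod c) + ((j - i : ℕ) : ZMod c) = (j : ZMod c) := by
        rw [Nat.cast_sub (by omega)]; ring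
      have hc := cor3 C t s hmax ht_inj ht_not hs_inj hs_mem hs_not hts1 hts2
        (i : ZMod c) (j - i) (by omega) (by omega) e hem henc hens f hfm hfnc hfns hef
        hev het (by rw [e1]; exact hfv) hft
      right; omega
    · exact Or.inl heq.symm
    · have e1 : C.reverse.v ((-(i : ZMod c)) + ((i - j : ℕ) : ZMod c))
          = C.v (j : ZMod c) := by
        rw [C.reverse_v]
        congr 1
        rw [Nat.cast_sub (by omega)]
        ring
      have hc := cor3 C.reverse t s hmax ht_inj ht_not' hs_inj hs_mem hs_not' hts1 hts2
        (-(i : ZMod c)) (i - j) (by omega) (by omega) e hem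
        (by rw [C.reverse_eset]; exact henc) hens f hfm
        (by rw [C.reverse_eset]; exact hfnc) hfns hef
        (by rw [ev0]; exact hev) het (by rw [e1]; exact hfv) hft
      right; omega

end Tail
/-- Claim: short paths around a longest cycle. Let `(C,P)` be a
lollipop in an `r`-uniform hypergraph `H` whose cycle `C = v_1, e_1, …, v_c, e_c, v_1`
is a longest Berge cycle of `H` (a 1-good lollipop); `H'` has edge set
`E(H) − E(C) − E(P)`. The first conjunct treats o-lollipops
(`P = u_0, f_0, u_1, …, f_{ℓ−1}, u_ℓ` with `u_0 = v_c`), the second p-lollipops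
(`P = f_0, u_1, …, f_{ℓ−1}, u_ℓ` with `f_0 = e_c`; in the `PartialBergePath` structure
the vertex `u_m` is `P.u ⟨m-1,_⟩` and the edge `f_m` is `P.f ⟨m,_⟩`). In both cases,
for all `1 ≤ q ≤ ℓ−1` and `1 ≤ i, j ≤ c` (vertex `v_i` is `C.v (i : ZMod c)`, edge
`e_i` is `C.e (i : ZMod c)`):
(i) if `u_q ∈ e_i` and `u_ℓ ∈ e_j`, then `j = i` or `|j − i| ≥ ℓ − q + 1`;
(ii) if `{v_i, u_q} ⊆ e` for some `e ∈ (E(H') ∪ {f_0}) − E(C)` and `u_ℓ ∈ e_j`, then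
either `j > i` and `j − i ≥ ℓ − q + 1`, or `i > j` and `i − j ≥ ℓ − q + 2`;
(iii) if there are distinct `e, f ∈ (E(H') ∪ {f_0}) − E(C)` with `{v_i, u_q} ⊆ e` and
`{v_j, u_ℓ} ⊆ f`, then `j = i` or `|j − i| ≥ ℓ − q + 2`. -/
theorem statement15 {α : Type*} [DecidableEq α] (r : ℕ)
    (H : BHypergraph α) (hunif : H.Uniform r) :
    (∀ (c ℓ : ℕ) (L : OLollipop H c ℓ),
      (∀ m, H.HasBergeCycle m → m ≤ c) →
      ∀ (q i j : ℕ) (_hq1 : 1 ≤ q) (_hq2 : q + 1 ≤ ℓ)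
        (_hi1 : 1 ≤ i) (_hi2 : i ≤ c) (_hj1 : 1 ≤ j) (_hj2 : j ≤ c),
        ((L.P.u ⟨q, by omega⟩ ∈ L.C.e (i : ZMod c) →
          L.P.u (Fin.last ℓ) ∈ L.C.e (j : ZMod c) →
          j = i ∨ ℓ - q + 1 ≤ Nat.dist j i) ∧
        (∀ e ∈ ((H.edges \ (L.C.eset ∪ L.P.eset)) ∪ {L.P.f ⟨0, by omega⟩}) \ L.C.eset,
          L.C.v (i : ZMod c) ∈ e → L.P.u ⟨q, by omega⟩ ∈ e →
          L.P.u (Fin.last ℓ) ∈ L.C.e (j : ZMod c) →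
          (i < j ∧ ℓ - q + 1 ≤ j - i) ∨ (j < i ∧ ℓ - q + 2 ≤ i - j)) ∧
        (∀ e ∈ ((H.edges \ (L.C.eset ∪ L.P.eset)) ∪ {L.P.f ⟨0, by omega⟩}) \ L.C.eset,
         ∀ f ∈ ((H.edges \ (L.C.eset ∪ L.P.eset)) ∪ {L.P.f ⟨0, by omega⟩}) \ L.C.eset,
          e ≠ f →
          L.C.v (i : ZMod c) ∈ e → L.P.u ⟨q, by omega⟩ ∈ e →
          L.C.v (j : ZMod c) ∈ f → L.P.u (Fin.last ℓ) ∈ f →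
          j = i ∨ ℓ - q + 2 ≤ Nat.dist j i))) ∧
    (∀ (c ℓ : ℕ) (L : PLollipop H c ℓ),
      (∀ m, H.HasBergeCycle m → m ≤ c) →
      ∀ (q i j : ℕ) (_hq1 : 1 ≤ q) (_hq2 : q + 1 ≤ ℓ)
        (_hi1 : 1 ≤ i) (_hi2 : i ≤ c) (_hj1 : 1 ≤ j) (_hj2 : j ≤ c),
        ((L.P.u ⟨q - 1, by omega⟩ ∈ L.C.e (i : ZMod c) →
          L.P.u ⟨ℓ - 1, by omega⟩ ∈ L.C.e (j : ZMod c) →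
          j = i ∨ ℓ - q + 1 ≤ Nat.dist j i) ∧
        (∀ e ∈ ((H.edges \ (L.C.eset ∪ L.P.eset)) ∪ {L.P.f ⟨0, by omega⟩}) \ L.C.eset,
          L.C.v (i : ZMod c) ∈ e → L.P.u ⟨q - 1, by omega⟩ ∈ e →
          L.P.u ⟨ℓ - 1, by omega⟩ ∈ L.C.e (j : ZMod c) →
          (i < j ∧ ℓ - q + 1 ≤ j - i) ∨ (j < i ∧ ℓ - q + 2 ≤ i - j)) ∧
        (∀ e ∈ ((H.edges \ (L.C.eset ∪ L.P.eset)) ∪ {L.P.f ⟨0, by omega⟩}) \ L.C.eset,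
         ∀ f ∈ ((H.edges \ (L.C.eset ∪ L.P.eset)) ∪ {L.P.f ⟨0, by omega⟩}) \ L.C.eset,
          e ≠ f →
          L.C.v (i : ZMod c) ∈ e → L.P.u ⟨q - 1, by omega⟩ ∈ e →
          L.C.v (j : ZMod c) ∈ f → L.P.u ⟨ℓ - 1, by omega⟩ ∈ f →
          j = i ∨ ℓ - q + 2 ≤ Nat.dist j i))) := by
  constructor
  · -- o-lollipops
    intro c ℓ L hmax q i j hq1 hq2 hi1 hi2 hj1 hj2
    haveI := L.C.neZero
    set t : Fin (ℓ - q + 1) → α := fun p => L.P.u ⟨q + (p : ℕ), by have := p.2; omega⟩ with hT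
    set s : Fin (ℓ - q) → Finset α := fun p => L.P.f ⟨q + (p : ℕ), by have := p.2; omega⟩ with hS
    have hPv : ∀ m : Fin (ℓ + 1), L.P.u m ∈ L.P.vset :=
      fun m => Finset.mem_image_of_mem _ (Finset.mem_univ m)
    have hPe : ∀ m : Fin ℓ, L.P.f m ∈ L.P.eset :=
      fun m => Finset.mem_image_of_mem _ (Finset.mem_univ m)
    have ht_inj : Function.Injective t := by
      intro x y h
      simp only [hT] at h
      have h2 := L.P.u_inj h
      rw [Fin.mk.injEq] at h2
      exact Fin.ext (by omega)
    have ht_not : ∀ p, t p ∉ L.C.vset := by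
      intro p hmem
      have h2 : t p ∈ L.C.vset ∩ L.P.vset :=
        Finset.mem_inter.mpr ⟨hmem, by simp only [hT]; exact hPv _⟩
      rw [L.inter_v, Finset.mem_singleton] at h2
      simp only [hT] at h2
      have h3 := congrArg Fin.val (L.P.u_inj h2)
      simp only [Fin.val_zero] at h3
      omega
    have hs_inj : Function.Injective s := by
      intro x y h
      simp only [hS] at h
      have h2 := L.P.f_inj h
      rw [Fin.mk.injEq] at h2
      exact Fin.ext (by omega)
    have hs_mem : ∀ p, s p ∈ H.edges := fun p => by simp only [hS]; exact L.P.f_mem _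
    have hs_not : ∀ p, s p ∉ L.C.eset := by
      intro p hmem
      have h2 : s p ∈ L.C.eset ∩ L.P.eset :=
        Finset.mem_inter.mpr ⟨hmem, by simp only [hS]; exact hPe _⟩
      rw [L.inter_e] at h2
      exact absurd h2 (Finset.notMem_empty _)
    have hts1 : ∀ p : Fin (ℓ - q), t p.castSucc ∈ s p := by
      intro p
      simp only [hT, hS]
      exact L.P.mem_cast ⟨q + (p : ℕ), by have := p.2; omega⟩
    have hts2 : ∀ p : Fin (ℓ - q), t p.succ ∈ s p := by
      intro p
      simp only [hT, hS]
      exact L.P.mem_succ ⟨q + (p : ℕ), by have := p.2; omega⟩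
    obtain ⟨part1, part2, part3⟩ := tailClaims L.C hmax (by omega) t s ht_inj ht_not
      hs_inj hs_mem hs_not hts1 hts2 i j hi1 hi2 hj1 hj2
    have ht0 : t 0 = L.P.u ⟨q, by omega⟩ := by
      simp only [hT]
      exact congrArg L.P.u (Fin.ext (by simp))
    have htl : t (Fin.last (ℓ - q)) = L.P.u (Fin.last ℓ) := by
      simp only [hT]
      exact congrArg L.P.u (Fin.ext (by simp; omega))
    have hedge : ∀ e ∈ ((H.edges \ (L.C.eset ∪ L.P.eset)) ∪ {L.P.f ⟨0, by omega⟩}) \ L.C.eset,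
        e ∈ H.edges ∧ e ∉ L.C.eset ∧ ∀ p, e ≠ s p := by
      intro e he
      rw [Finset.mem_sdiff] at he
      obtain ⟨h1, h2⟩ := he
      rw [Finset.mem_union] at h1
      rcases h1 with h1 | h1
      · rw [Finset.mem_sdiff] at h1
        refine ⟨h1.1, h2, fun p hp => ?_⟩
        apply h1.2
        apply Finset.mem_union_right
        rw [hp]
        simp only [hS]
        exact hPe _
      · rw [Finset.mem_singleton] at h1
        refine ⟨by rw [h1]; exact L.P.f_mem _, h2, fun p hp => ?_⟩
        rw [h1] at hp
        simp only [hS] at hp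
        have h3 := congrArg Fin.val (L.P.f_inj hp)
        simp only at h3
        omega
    refine ⟨fun hqe hle => ?_, fun e he hvi hti hle => ?_,
      fun e he f hf hef hvi hti hvj htle => ?_⟩
    · exact part1 (by rw [ht0]; exact hqe) (by rw [htl]; exact hle)
    · obtain ⟨hem, henc, hens⟩ := hedge e he
      exact part2 e hem henc hens hvi (by rw [ht0]; exact hti) (by rw [htl]; exact hle)
    · obtain ⟨hem, henc, hens⟩ := hedge e he
      obtain ⟨hfm, hfnc, hfns⟩ := hedge f hf
      exact part3 e hem henc hens f hfm hfnc hfns hef hvi (by rw [ht0]; exact hti) hvj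
        (by rw [htl]; exact htle)

  · -- p-lollipops
    intro c ℓ L hmax q i j hq1 hq2 hi1 hi2 hj1 hj2
    haveI := L.C.neZero
    set t : Fin (ℓ - q + 1) → α := fun p => L.P.u ⟨q - 1 + (p : ℕ), by have := p.2; omega⟩ with hT
    set s : Fin (ℓ - q) → Finset α := fun p => L.P.f ⟨q + (p : ℕ), by have := p.2; omega⟩ with hS
    have hPv : ∀ m : Fin ℓ, L.P.u m ∈ L.P.vset :=
      fun m => Finset.mem_image_of_mem _ (Finset.mem_univ m)
    have hPe : ∀ m : Fin ℓ, L.P.f m ∈ L.P.eset :=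
      fun m => Finset.mem_image_of_mem _ (Finset.mem_univ m)
    have ht_inj : Function.Injective t := by
      intro x y h
      simp only [hT] at h
      have h2 := L.P.u_inj h
      rw [Fin.mk.injEq] at h2
      exact Fin.ext (by omega)
    have ht_not : ∀ p, t p ∉ L.C.vset := by
      intro p hmem
      have h2 : t p ∈ L.C.vset ∩ L.P.vset :=
        Finset.mem_inter.mpr ⟨hmem, by simp only [hT]; exact hPv _⟩
      rw [L.inter_v] at h2
      exact absurd h2 (Finset.notMem_empty _)
    have hs_inj : Function.Injective s := by
      intro x y h
      simp only [hS] at h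
      have h2 := L.P.f_inj h
      rw [Fin.mk.injEq] at h2
      exact Fin.ext (by omega)
    have hs_mem : ∀ p, s p ∈ H.edges := fun p => by simp only [hS]; exact L.P.f_mem _
    have hs_not : ∀ p, s p ∉ L.C.eset := by
      intro p hmem
      have h2 : s p ∈ L.C.eset ∩ L.P.eset :=
        Finset.mem_inter.mpr ⟨hmem, by simp only [hS]; exact hPe _⟩
      rw [L.inter_e, Finset.mem_singleton] at h2
      simp only [hS] at h2
      have h3 := congrArg Fin.val (L.P.f_inj h2)
      simp only at h3
      omega
    have hts1 : ∀ p : Fin (ℓ - q), t p.castSucc ∈ s p := by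
      intro p
      have h2 := L.P.mem_next (q - 1 + (p : ℕ)) (by have := p.2; omega)
      have h3 : (⟨q - 1 + (p : ℕ) + 1, by have := p.2; omega⟩ : Fin ℓ)
          = ⟨q + (p : ℕ), by have := p.2; omega⟩ :=
        Fin.ext (by show q - 1 + (p : ℕ) + 1 = q + (p : ℕ); omega)
      rw [h3] at h2
      simp only [hT, hS]
      exact h2
    have hts2 : ∀ p : Fin (ℓ - q), t p.succ ∈ s p := by
      intro p
      have h2 := L.P.mem_self ⟨q + (p : ℕ), by have := p.2; omega⟩
      simp only [hT, hS]
      have h3 : (⟨q - 1 + ((p.succ : Fin (ℓ - q + 1)) : ℕ), by have := p.2.le; have := p.succ.2; omega⟩ : Fin ℓ)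
          = ⟨q + (p : ℕ), by have := p.2; omega⟩ := Fin.ext (by simp [Fin.val_succ]; omega)
      rw [h3]
      exact h2
    obtain ⟨part1, part2, part3⟩ := tailClaims L.C hmax (by omega) t s ht_inj ht_not
      hs_inj hs_mem hs_not hts1 hts2 i j hi1 hi2 hj1 hj2
    have ht0 : t 0 = L.P.u ⟨q - 1, by omega⟩ := by
      simp only [hT]
      exact congrArg L.P.u (Fin.ext (by simp))
    have htl : t (Fin.last (ℓ - q)) = L.P.u ⟨ℓ - 1, by omega⟩ := by
      simp only [hT]
      exact congrArg L.P.u (Fin.ext (by simp; omega))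
    have hedge : ∀ e ∈ ((H.edges \ (L.C.eset ∪ L.P.eset)) ∪ {L.P.f ⟨0, by omega⟩}) \ L.C.eset,
        e ∈ H.edges ∧ e ∉ L.C.eset ∧ ∀ p, e ≠ s p := by
      intro e he
      rw [Finset.mem_sdiff] at he
      obtain ⟨h1, h2⟩ := he
      rw [Finset.mem_union] at h1
      rcases h1 with h1 | h1
      · rw [Finset.mem_sdiff] at h1
        refine ⟨h1.1, h2, fun p hp => ?_⟩
        apply h1.2
        apply Finset.mem_union_right
        rw [hp]
        simp only [hS]
        exact hPe _
      · rw [Finset.mem_singleton] at h1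
        exact absurd (by rw [h1]; exact L.first_edge) h2
    refine ⟨fun hqe hle => ?_, fun e he hvi hti hle => ?_,
      fun e he f hf hef hvi hti hvj htle => ?_⟩
    · exact part1 (by rw [ht0]; exact hqe) (by rw [htl]; exact hle)
    · obtain ⟨hem, henc, hens⟩ := hedge e he
      exact part2 e hem henc hens hvi (by rw [ht0]; exact hti) (by rw [htl]; exact hle)
    · obtain ⟨hem, henc, hens⟩ := hedge e he
      obtain ⟨hfm, hfnc, hfns⟩ := hedge f hf
      exact part3 e hem henc hens f hfm hfnc hfns hef hvi (by rw [ht0]; exact hti) hvj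
        (by rw [htl]; exact htle)
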